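/- Fix integers η ≥ 2 and ν ≥ 1 with η² ≤ 2π²ν, let f : ℤ/2ηℤ → ℂ, and let F : ℕ × ℤ/2ηℤ → ℂ be the solution of the explicit discrete heat scheme with initial condition f. If |f(j)| ≤ M for all j, for some real M ≥ 0, then |F(n,j)| ≤ M for all n ∈ ℕ and all j ∈ ℤ/2ηℤ. -/

import Mathlib

open Real

/-- The explicit discrete heat scheme on the grid of `2η` points, time step `1/ν`:
`F(0,j) = f(j)`,
`F(n+1,j) = F(n,j) + (η²/(4π²ν))·(F(n,j+2) − 2F(n,j) + F(n,j−2))`. -/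
noncomputable def heatScheme (η ν : ℕ) (f : ZMod (2 * η) → ℂ) : ℕ → ZMod (2 * η) → ℂ
  | 0 => f
  | n + 1 => fun j =>
      heatScheme η ν f n j + ((η : ℂ) ^ 2 / (4 * (π : ℂ) ^ 2 * ν)) *
        (heatScheme η ν f n (j + 2) - 2 * heatScheme η ν f n j + heatScheme η ν f n (j - 2))

/-- Under the stability condition `η² ≤ 2π²ν`, the explicit discrete
heat scheme preserves the bound `|f| ≤ M`: `|F(n,j)| ≤ M` for all `n` and `j`. -/
theorem heatScheme_bounded (η ν : ℕ) (hη : 2 ≤ η) (hν : 1 ≤ ν)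
    (hstab : (η : ℝ) ^ 2 ≤ 2 * π ^ 2 * ν)
    (f : ZMod (2 * η) → ℂ) (M : ℝ) (hM : 0 ≤ M)
    (hf : ∀ j : ZMod (2 * η), ‖f j‖ ≤ M) :
    ∀ (n : ℕ) (j : ZMod (2 * η)), ‖heatScheme η ν f n j‖ ≤ M := by
  intro n
  induction n with
  | zero => exact hf
  | succ n ih =>
    intro j
    set c : ℝ := (η : ℝ) ^ 2 / (4 * π ^ 2 * ν) with hc
    have hπ : (0:ℝ) < π ^ 2 := by positivity
    have hν' : (0:ℝ) < ν := by exact_mod_cast hν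
    have hc0 : 0 ≤ c := by positivity
    have hc2 : 2 * c ≤ 1 := by
      rw [hc, mul_div_assoc', div_le_one (by positivity)]
      nlinarith
    have hcast : ((η : ℂ) ^ 2 / (4 * (π : ℂ) ^ 2 * ν)) = (c : ℂ) := by
      push_cast [hc]; ring
    have key : heatScheme η ν f (n+1) j =
        ((1 - 2*c : ℝ) : ℂ) * heatScheme η ν f n j
        + (c : ℂ) * heatScheme η ν f n (j + 2)
        + (c : ℂ) * heatScheme η ν f n (j - 2) := by
      show heatScheme η ν f n j + ((η : ℂ) ^ 2 / (4 * (π : ℂ) ^ 2 * ν)) *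
        (heatScheme η ν f n (j + 2) - 2 * heatScheme η ν f n j + heatScheme η ν f n (j - 2)) = _
      rw [hcast]; push_cast; ring
    rw [key]
    calc ‖_‖ ≤ ‖((1 - 2*c : ℝ) : ℂ) * heatScheme η ν f n j‖
          + ‖(c : ℂ) * heatScheme η ν f n (j + 2)‖
          + ‖(c : ℂ) * heatScheme η ν f n (j - 2)‖ := by
          apply le_trans (norm_add_le _ _)
          gcongr
          exact norm_add_le _ _
      _ ≤ (1 - 2*c) * M + c * M + c * M := by
          rw [norm_mul, norm_mul, norm_mul, Complex.norm_real, Complex.norm_real, Real.norm_eq_abs, Real.norm_eq_abs,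
            abs_of_nonneg (by linarith), abs_of_nonneg hc0]
          gcongr <;> first | linarith | apply ih
      _ = M := by ring
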